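/- For d ≥ 1, a : Fin d → ℝ, and each μ : Fin d, define the operator X^μ on Schwartz functions f : ℝ^d → ℂ by (X^μ f)(q) = −i * (a μ) * ( q_μ * (∂f/∂q_μ)(q) + f(q)/2 ), where ∂f/∂q_μ denotes the partial derivative of f in the μ-th coordinate direction. Then each X^μ maps Schwartz functions to Schwartz functions, and the operators pairwise commute: X^μ (X^ν f) = X^ν (X^μ f) for all μ, ν : Fin d and every Schwartz function f. -/

import Mathlib

/-- The operator `X^μ` acting on functions on `ℝ^d`:
`(X^μ f)(q) = -i * a μ * (q μ * ∂f/∂q_μ (q) + f q / 2)`. -/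
noncomputable def Xop {d : ℕ} (a : Fin d → ℝ) (μ : Fin d)
    (f : EuclideanSpace ℝ (Fin d) → ℂ) : EuclideanSpace ℝ (Fin d) → ℂ :=
  fun q => -Complex.I * (a μ : ℂ) *
    ((q μ : ℂ) * fderiv ℝ f q (EuclideanSpace.single μ 1) + f q / 2)

namespace XopAux

variable {d : ℕ}

noncomputable def coordL (ν : Fin d) : EuclideanSpace ℝ (Fin d) →L[ℝ] ℂ :=
  Complex.ofRealCLM.comp (EuclideanSpace.proj ν)

noncomputable abbrev eE (μ : Fin d) : EuclideanSpace ℝ (Fin d) := EuclideanSpace.single μ 1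

lemma keyX (f : EuclideanSpace ℝ (Fin d) → ℂ) (hf : ContDiff ℝ (⊤ : ℕ∞) f) (a : Fin d → ℝ)
    (ν μ : Fin d) (q : EuclideanSpace ℝ (Fin d)) :
    fderiv ℝ (Xop a ν f) q (eE μ)
      = -Complex.I * (a ν : ℂ) *
        (((eE μ ν : ℝ) : ℂ) * fderiv ℝ f q (eE ν)
          + (q ν : ℂ) * fderiv ℝ (fderiv ℝ f) q (eE μ) (eE ν)
          + fderiv ℝ f q (eE μ) / 2) := by
  have hf' : ContDiff ℝ (⊤ : ℕ∞) (fderiv ℝ f) := (contDiff_infty_iff_fderiv.mp hf).2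
  have h1 : HasFDerivAt (fun q : EuclideanSpace ℝ (Fin d) => ((q ν : ℝ) : ℂ)) (coordL ν) q :=
    (coordL ν).hasFDerivAt
  have hD : HasFDerivAt (fderiv ℝ f) (fderiv ℝ (fderiv ℝ f) q) q :=
    (hf'.differentiable (by simp) q).hasFDerivAt
  have h2 : HasFDerivAt (fun q => fderiv ℝ f q (eE ν))
      ((ContinuousLinearMap.apply ℝ ℂ (eE ν)).comp (fderiv ℝ (fderiv ℝ f) q)) q :=
    (ContinuousLinearMap.apply ℝ ℂ (eE ν)).hasFDerivAt.comp q hD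
  have h3 : HasFDerivAt f (fderiv ℝ f q) q := (hf.differentiable (by simp) q).hasFDerivAt
  have h3' : HasFDerivAt (fun q => f q / 2) ((2⁻¹ : ℂ) • fderiv ℝ f q) q := by
    simpa [div_eq_inv_mul] using h3.const_mul (2⁻¹ : ℂ)
  have H := (((h1.mul h2).add h3').const_mul (-Complex.I * (a ν : ℂ))).fderiv
  rw [show Xop a ν f = fun q => -Complex.I * (a ν : ℂ)
      * ((fun q : EuclideanSpace ℝ (Fin d) => ((q ν : ℝ) : ℂ)) q
          * (fun q => fderiv ℝ f q (eE ν)) q + f q / 2) from rfl]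
  erw [H]
  simp [coordL, ContinuousLinearMap.smul_apply, smul_eq_mul]
  ring

end XopAux

open XopAux in
theorem Xop_maps_schwartz_and_commutes
    {d : ℕ} (hd : 1 ≤ d) (a : Fin d → ℝ) :
    (∀ (μ : Fin d) (f : SchwartzMap (EuclideanSpace ℝ (Fin d)) ℂ),
      ∃ g : SchwartzMap (EuclideanSpace ℝ (Fin d)) ℂ, ⇑g = Xop a μ ⇑f) ∧
    (∀ (μ ν : Fin d) (f : SchwartzMap (EuclideanSpace ℝ (Fin d)) ℂ),
      Xop a μ (Xop a ν ⇑f) = Xop a ν (Xop a μ ⇑f)) := by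
  constructor
  · intro μ f
    refine ⟨(-Complex.I * (a μ : ℂ)) •
      (SchwartzMap.bilinLeftCLM (ContinuousLinearMap.mul ℝ ℂ) (coordL μ).hasTemperateGrowth
        (LineDeriv.lineDerivOpCLM ℝ (SchwartzMap (EuclideanSpace ℝ (Fin d)) ℂ) (eE μ) f) + (2⁻¹ : ℂ) • f), ?_⟩
    funext q
    rw [SchwartzMap.smul_apply, SchwartzMap.add_apply, SchwartzMap.smul_apply,
      show (SchwartzMap.bilinLeftCLM (ContinuousLinearMap.mul ℝ ℂ)
          (coordL μ).hasTemperateGrowth (LineDeriv.lineDerivOpCLM ℝ (SchwartzMap (EuclideanSpace ℝ (Fin d)) ℂ) (eE μ) f)) q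
        = (LineDeriv.lineDerivOpCLM ℝ (SchwartzMap (EuclideanSpace ℝ (Fin d)) ℂ) (eE μ) f) q * ((q μ : ℝ) : ℂ) from rfl,
      LineDeriv.lineDerivOpCLM_apply, SchwartzMap.lineDerivOp_apply_eq_fderiv]
    simp only [Xop, smul_eq_mul, eE]
    ring
  · intro μ ν f
    have hf : ContDiff ℝ (⊤ : ℕ∞) (⇑f) := f.smooth ⊤
    funext q
    have hsymm : fderiv ℝ (fderiv ℝ (⇑f)) q (eE μ) (eE ν)
        = fderiv ℝ (fderiv ℝ (⇑f)) q (eE ν) (eE μ) := by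
      have := (hf.contDiffAt (x := q)).isSymmSndFDerivAt (by rw [minSmoothness_of_isRCLikeNormedField]; exact WithTop.coe_le_coe.mpr le_top)
      exact this (eE μ) (eE ν)
    show -Complex.I * (a μ : ℂ) * ((q μ : ℂ) * fderiv ℝ (Xop a ν ⇑f) q (eE μ)
        + Xop a ν (⇑f) q / 2)
      = -Complex.I * (a ν : ℂ) * ((q ν : ℂ) * fderiv ℝ (Xop a μ ⇑f) q (eE ν)
        + Xop a μ (⇑f) q / 2)
    rw [keyX _ hf a ν μ q, keyX _ hf a μ ν q]
    by_cases h : μ = ν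
    · subst h; rfl
    · have h1 : ((eE μ : EuclideanSpace ℝ (Fin d)) ν : ℝ) = 0 := by
        simp [eE, EuclideanSpace.single_apply, Ne.symm h]
      have h2 : ((eE ν : EuclideanSpace ℝ (Fin d)) μ : ℝ) = 0 := by
        simp [eE, EuclideanSpace.single_apply, h]
      simp only [Xop, h1, h2, hsymm, Complex.ofReal_zero, zero_mul]
      ring
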